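/- Let A ∈ ℝ^{k×n} and D ∈ ℝ^{l×n} be matrices with ker(A) ∩ ker(D) = {0}, let m ∈ ℝ^k, σ > 0 and λ > 0. Then the unnormalized posterior density u ↦ exp(−(1/(2σ²))‖m − A u‖₂² − λ‖D u‖₁) is integrable over ℝ^n. -/

import Mathlib

open MeasureTheory Set

lemma aux_int_exp_abs (d : ℝ) (hd : 0 < d) :
    Integrable (fun x : ℝ => Real.exp (-(d * |x|))) := by
  have hIoi : IntegrableOn (fun x : ℝ => Real.exp (-(d * |x|))) (Ioi 0) := by
    refine ((exp_neg_integrableOn_Ioi 0 hd)).congr_fun ?_ measurableSet_Ioi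
    intro x hx
    simp [abs_of_pos (show (0:ℝ) < x from hx), neg_mul]
  have hIic : IntegrableOn (fun x : ℝ => Real.exp (-(d * |x|))) (Iic 0) := by
    rw [← Measure.map_neg_eq_self (volume : Measure ℝ)]
    have me : MeasurableEmbedding fun x : ℝ => -x := (Homeomorph.neg ℝ).measurableEmbedding
    rw [me.integrableOn_map_iff]
    simp_rw [Function.comp_def, abs_neg, neg_preimage, neg_Iic, neg_zero]
    exact (integrableOn_Ici_iff_integrableOn_Ioi).mpr hIoi
  have : IntegrableOn (fun x : ℝ => Real.exp (-(d * |x|))) (Iic 0 ∪ Ioi 0) := hIic.union hIoi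
  rwa [Iic_union_Ioi, integrableOn_univ] at this

lemma aux_eps {n : ℕ} (N : (Fin n → ℝ) → ℝ) (hc : Continuous N)
    (hhom : ∀ (c : ℝ) (u : Fin n → ℝ), N (c • u) = |c| * N u)
    (hpos : ∀ u, u ≠ 0 → 0 < N u) :
    ∃ ε > 0, ∀ u, ε * ‖u‖ ≤ N u := by
  have hN0 : N 0 = 0 := by
    have := hhom 0 0
    simpa using this
  rcases isEmpty_or_nonempty (Fin n) with h | h
  · refine ⟨1, one_pos, fun u => ?_⟩
    have hu : u = 0 := Subsingleton.elim u 0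
    simp [hu, hN0]
  · have hsne : (Metric.sphere (0 : Fin n → ℝ) 1).Nonempty := by
      refine ⟨fun _ => 1, ?_⟩
      simp [mem_sphere_zero_iff_norm]
    obtain ⟨z, hzS, hmin⟩ :=
      (isCompact_sphere (0 : Fin n → ℝ) 1).exists_isMinOn hsne hc.continuousOn
    have hz1 : ‖z‖ = 1 := mem_sphere_zero_iff_norm.mp hzS
    have hzne : z ≠ 0 := by
      intro h0; rw [h0, norm_zero] at hz1; norm_num at hz1
    refine ⟨N z, hpos z hzne, fun u => ?_⟩
    rcases eq_or_ne u 0 with rfl | hu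
    · simp [hN0]
    · have hun : (0 : ℝ) < ‖u‖ := norm_pos_iff.mpr hu
      set v : Fin n → ℝ := ‖u‖⁻¹ • u with hv
      have hv1 : ‖v‖ = 1 := by
        rw [hv, norm_smul, norm_inv, norm_norm, inv_mul_cancel₀ hun.ne']
      have hvS : v ∈ Metric.sphere (0 : Fin n → ℝ) 1 := mem_sphere_zero_iff_norm.mpr hv1
      have h2 : N u = ‖u‖ * N v := by
        have h3 : (‖u‖ : ℝ) • v = u := by
          rw [hv, smul_smul, mul_inv_cancel₀ hun.ne', one_smul]
        rw [← abs_of_pos hun, ← hhom, h3]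
      rw [h2, mul_comm (N z) ‖u‖]
      exact mul_le_mul_of_nonneg_left (hmin hvS) hun.le

set_option maxHeartbeats 1000000 in
/-- If `ker A ∩ ker D = {0}`, the unnormalized posterior density
`u ↦ exp(−(1/(2σ²))‖m − Au‖₂² − λ‖Du‖₁)` is integrable over `ℝⁿ`. -/
theorem stmt_1 (k l n : ℕ) (A : Matrix (Fin k) (Fin n) ℝ) (D : Matrix (Fin l) (Fin n) ℝ)
    (hker : ∀ u : Fin n → ℝ, A.mulVec u = 0 → D.mulVec u = 0 → u = 0)
    (m : Fin k → ℝ) (σ lam : ℝ) (hσ : 0 < σ) (hlam : 0 < lam) :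
    Integrable (fun u : Fin n → ℝ =>
      Real.exp (-(1 / (2 * σ ^ 2)) * (∑ j, (m j - A.mulVec u j) ^ 2)
        - lam * ∑ j, |D.mulVec u j|)) := by
  classical
  have hσ2 : (0 : ℝ) < σ ^ 2 := by positivity
  set q : ℝ := 1 / (2 * σ ^ 2) with hqdef
  have hq : 0 < q := by positivity
  set toE : (Fin k → ℝ) ≃L[ℝ] EuclideanSpace ℝ (Fin k) :=
    (EuclideanSpace.equiv (Fin k) ℝ).symm with htoE
  have htoE_apply : ∀ (x : Fin k → ℝ) (j : Fin k), toE x j = x j := fun x j => rfl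
  -- continuity of the linear maps
  have hA : Continuous fun u : Fin n → ℝ => A.mulVec u := by
    refine continuous_pi fun j => ?_
    simp only [Matrix.mulVec, dotProduct]
    exact continuous_finset_sum _ fun i _ => continuous_const.mul (continuous_apply i)
  have hD : Continuous fun u : Fin n → ℝ => D.mulVec u := by
    refine continuous_pi fun j => ?_
    simp only [Matrix.mulVec, dotProduct]
    exact continuous_finset_sum _ fun i _ => continuous_const.mul (continuous_apply i)
  set N : (Fin n → ℝ) → ℝ :=
    fun u => ‖toE (A.mulVec u)‖ + ∑ j, |D.mulVec u j| with hNdef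
  have hNc : Continuous N := by
    refine Continuous.add ?_ ?_
    · exact (toE.continuous.comp hA).norm
    · exact continuous_finset_sum _ fun j _ => ((continuous_apply j).comp hD).abs
  have hNhom : ∀ (c : ℝ) (u : Fin n → ℝ), N (c • u) = |c| * N u := by
    intro c u
    have h1 : toE (A.mulVec (c • u)) = c • toE (A.mulVec u) := by
      rw [Matrix.mulVec_smul]; exact _root_.map_smul toE c _
    simp only [hNdef]
    rw [h1, norm_smul]
    simp only [Matrix.mulVec_smul, Pi.smul_apply, smul_eq_mul, abs_mul, Real.norm_eq_abs,
      ← Finset.mul_sum, mul_add]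
  have hNpos : ∀ u, u ≠ 0 → 0 < N u := by
    intro u hu
    have h1 : 0 ≤ ‖toE (A.mulVec u)‖ := norm_nonneg _
    have h2 : 0 ≤ ∑ j, |D.mulVec u j| := Finset.sum_nonneg fun j _ => abs_nonneg _
    rcases (add_nonneg h1 h2).lt_or_eq with h | h
    · exact h
    · exfalso
      have hA0 : ‖toE (A.mulVec u)‖ = 0 := le_antisymm (by linarith) h1
      have hD0 : ∑ j, |D.mulVec u j| = 0 := le_antisymm (by linarith) h2
      have hAz : A.mulVec u = 0 := by
        have : toE (A.mulVec u) = 0 := norm_eq_zero.mp hA0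
        have := toE.injective (by simpa using this)
        simpa using this
      have hDz : D.mulVec u = 0 := by
        funext j
        have := (Finset.sum_eq_zero_iff_of_nonneg (fun j _ => abs_nonneg _)).mp hD0 j
          (Finset.mem_univ j)
        simpa [abs_eq_zero] using this
      exact hu (hker u hAz hDz)
  obtain ⟨ε, hε, hεle⟩ := aux_eps N hNc hNhom hNpos
  set c : ℝ := min (2 * q) lam with hcdef
  have hc : 0 < c := lt_min (by positivity) hlam
  set d : ℝ := c * ε / (n + 1) with hddef
  have hn1 : (0 : ℝ) < n + 1 := by positivity
  have hd : 0 < d := by positivity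
  set M : ℝ := ‖toE m‖ with hMdef
  set C0 : ℝ := q + 2 * q * M with hC0def
  have hg : Integrable (fun u : Fin n → ℝ =>
      Real.exp C0 * ∏ i, Real.exp (-(d * |u i|))) :=
    (Integrable.fintype_prod (f := fun _ (x : ℝ) => Real.exp (-(d * |x|)))
      (fun _ => aux_int_exp_abs d hd)).const_mul _
  refine hg.mono ?_ (ae_of_all _ fun u => ?_)
  · have h1 : Continuous fun u : Fin n → ℝ => ∑ j, (m j - A.mulVec u j) ^ 2 :=
      continuous_finset_sum _ fun j _ =>
        (continuous_const.sub ((continuous_apply j).comp hA)).pow 2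
    have h2 : Continuous fun u : Fin n → ℝ => ∑ j, |D.mulVec u j| :=
      continuous_finset_sum _ fun j _ => ((continuous_apply j).comp hD).abs
    exact (Real.continuous_exp.comp
      ((continuous_const.mul h1).sub (continuous_const.mul h2))).aestronglyMeasurable
  · -- pointwise bound
    set a : ℝ := ‖toE (A.mulVec u)‖ with hadef
    set b : ℝ := ∑ j, |D.mulVec u j| with hbdef
    set r : ℝ := ‖toE m - toE (A.mulVec u)‖ with hrdef
    have hS : ∑ j, (m j - A.mulVec u j) ^ 2 = r ^ 2 := by
      rw [hrdef, EuclideanSpace.norm_eq, Real.sq_sqrt (Finset.sum_nonneg fun j _ => by positivity)]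
      refine Finset.sum_congr rfl fun j _ => ?_
      have : (toE m - toE (A.mulVec u)) j = m j - A.mulVec u j := rfl
      rw [this, Real.norm_eq_abs, sq_abs]
    have htri : a - M ≤ r := by
      have := norm_sub_norm_le (toE (A.mulVec u)) (toE m)
      rw [← norm_sub_rev] at this
      linarith [this]
    have hr0 : 0 ≤ r := norm_nonneg _
    have ha0 : 0 ≤ a := norm_nonneg _
    have hb0 : 0 ≤ b := Finset.sum_nonneg fun j _ => abs_nonneg _
    have hsum_le : ∑ i, |u i| ≤ (n : ℝ) * ‖u‖ := by
      calc ∑ i, |u i| ≤ ∑ _i : Fin n, ‖u‖ :=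
            Finset.sum_le_sum fun i _ => by
              simpa [Real.norm_eq_abs] using norm_le_pi_norm u i
        _ = (n : ℝ) * ‖u‖ := by
            simp [Finset.sum_const, Finset.card_univ, mul_comm]
    have hNu : ε * ‖u‖ ≤ a + b := hεle u
    have hu0 : (0 : ℝ) ≤ ‖u‖ := norm_nonneg _
    have hdn : d * (n + 1) = c * ε := by
      rw [hddef]; field_simp
    -- the exponent inequality
    have hexp : -(1 / (2 * σ ^ 2)) * (∑ j, (m j - A.mulVec u j) ^ 2) - lam * b
        ≤ C0 - d * ∑ i, |u i| := by
      rw [hS]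
      have f1 : 0 ≤ q * (r - 1) ^ 2 := by positivity
      have f2 : 2 * q * (a - M) ≤ 2 * q * r := by nlinarith
      have f3 : c * a ≤ 2 * q * a := mul_le_mul_of_nonneg_right (min_le_left _ _) ha0
      have f4 : c * b ≤ lam * b := mul_le_mul_of_nonneg_right (min_le_right _ _) hb0
      have f5 : c * (ε * ‖u‖) ≤ c * (a + b) := mul_le_mul_of_nonneg_left hNu hc.le
      have f6 : d * (∑ i, |u i|) ≤ d * ((n : ℝ) * ‖u‖) :=
        mul_le_mul_of_nonneg_left hsum_le hd.le
      have f7 : d * ((n : ℝ) * ‖u‖) + d * ‖u‖ = c * (ε * ‖u‖) := by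
        have : d * ((n : ℝ) * ‖u‖) + d * ‖u‖ = (d * (n + 1)) * ‖u‖ := by ring
        rw [this, hdn]; ring
      have f8 : 0 ≤ d * ‖u‖ := mul_nonneg hd.le hu0
      have hq' : -(1 / (2 * σ ^ 2)) = -q := by rw [hqdef]
      rw [hq', hC0def]
      nlinarith [f1, f2, f3, f4, f5, f6, f7, f8]
    have hprod : Real.exp C0 * ∏ i, Real.exp (-(d * |u i|))
        = Real.exp (C0 - d * ∑ i, |u i|) := by
      rw [← Real.exp_sum, ← Real.exp_add]
      congr 1
      rw [Finset.sum_neg_distrib, Finset.mul_sum]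
      ring
    rw [Real.norm_eq_abs, Real.abs_exp, Real.norm_eq_abs, hprod, Real.abs_exp]
    exact Real.exp_le_exp.mpr hexp
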